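/- Let R be a field, and let A ∈ M_n E^m have degree-zero component A₀ = diag(λ₁,…,λ_n) with pairwise distinct λ_i ∈ R, and degree-one component A₁ = (v_{ij}) with v_{ij} ∈ E^m_1. Let f(x) = ∏_{i=1}^n (x − λ_i) and B = f(A). Then for all indices r ≠ s, the (r,s) entry of the degree-two component B₂ of B equals (1/(λ_r − λ_s))·(f'(λ_r) v_{rr} + f'(λ_s) v_{ss})·v_{rs}, where f' is the formal derivative of f and 1/(λ_r − λ_s) denotes the inverse of λ_r − λ_s in R. -/

import Mathlib

open Polynomial

section scalars
variable {R : Type*} [CommRing R]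

/-- `gchD k x y = ∑_{a+b=k-1} x^a y^b`. -/
def gchD : ℕ → R → R → R
  | 0, _, _ => 0
  | (k+1), x, y => x ^ k + y * gchD k x y

/-- `gchE k x y z = ∑_{a+b+c=k-2} x^a y^b z^c`. -/
def gchE : ℕ → R → R → R → R
  | 0, _, _, _ => 0
  | (k+1), x, y, z => gchD k x y + z * gchE k x y z

lemma gchD_mul (k : ℕ) (x y : R) : (x - y) * gchD k x y = x ^ k - y ^ k := by
  induction k with
  | zero => simp [gchD]
  | succ k ih => simp only [gchD]; linear_combination y * ih

lemma gchD_diag (k : ℕ) (x : R) : gchD k x x = k * x ^ (k - 1) := by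
  induction k with
  | zero => simp [gchD]
  | succ k ih =>
    cases k with
    | zero => simp [gchD]
    | succ j =>
      rw [show gchD (j + 1 + 1) x x = x ^ (j + 1) + x * gchD (j + 1) x x from rfl, ih,
        Nat.succ_sub_one, Nat.succ_sub_one]
      push_cast
      ring

lemma gchE_mul (k : ℕ) (x y z : R) :
    (x - z) * gchE k x y z = gchD k x y - gchD k y z := by
  induction k with
  | zero => simp [gchE, gchD]
  | succ k ih => simp only [gchE, gchD]; linear_combination z * ih + gchD_mul k x y

lemma gchD_sum (f : R[X]) (x y : R) :
    (x - y) * (f.sum fun k c => c * gchD k x y) = f.eval x - f.eval y := by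
  rw [eval_eq_sum, eval_eq_sum, Polynomial.sum, Polynomial.sum, Polynomial.sum,
    Finset.mul_sum, ← Finset.sum_sub_distrib]
  refine Finset.sum_congr rfl fun k _ => ?_
  linear_combination f.coeff k * gchD_mul k x y

lemma gchD_sum_diag (f : R[X]) (x : R) :
    (f.sum fun k c => c * gchD k x x) = (derivative f).eval x := by
  rw [derivative_eval, Polynomial.sum, Polynomial.sum]
  refine Finset.sum_congr rfl fun k _ => ?_
  rw [gchD_diag, mul_assoc]

lemma gchE_sum (f : R[X]) (x y z : R) :
    (x - z) * (f.sum fun k c => c * gchE k x y z) =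
      (f.sum fun k c => c * gchD k x y) - (f.sum fun k c => c * gchD k y z) := by
  rw [Polynomial.sum, Polynomial.sum, Polynomial.sum, Finset.mul_sum, ← Finset.sum_sub_distrib]
  refine Finset.sum_congr rfl fun k _ => ?_
  linear_combination f.coeff k * gchE_mul k x y z

end scalars

section graded
open DirectSum
variable {R E : Type*} [CommRing R] [Ring E] [Algebra R E]
variable (𝒜 : ℕ → Submodule R E) [GradedAlgebra 𝒜]

lemma gch_decompose_mul_apply (x y : E) (c : ℕ) :
    (decompose 𝒜 (x * y) c : E) =
      ∑ k ∈ Finset.range (c + 1),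
        (decompose 𝒜 x k : E) * (decompose 𝒜 y (c - k) : E) := by
  classical
  rw [← Finset.Nat.sum_antidiagonal_eq_sum_range_succ_mk
    (fun p => (decompose 𝒜 x p.1 : E) * (decompose 𝒜 y p.2 : E))]
  rw [decompose_mul, DirectSum.coe_mul_apply]
  refine Finset.sum_subset ?_ ?_
  · rintro ⟨a, b⟩ hab
    rw [Finset.mem_filter] at hab
    exact Finset.HasAntidiagonal.mem_antidiagonal.mpr hab.2
  · rintro ⟨a, b⟩ hab hns
    rw [Finset.HasAntidiagonal.mem_antidiagonal] at hab
    rw [Finset.mem_filter, Finset.mem_product, not_and_or] at hns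
    rcases hns with h | h
    · rcases not_and_or.mp h with h | h
      · rw [DFinsupp.notMem_support_iff.mp h, ZeroMemClass.coe_zero, zero_mul]
      · rw [DFinsupp.notMem_support_iff.mp h, ZeroMemClass.coe_zero, mul_zero]
    · exact absurd hab h

lemma gch_mul0 (x y : E) :
    (decompose 𝒜 (x * y) 0 : E) = (decompose 𝒜 x 0 : E) * (decompose 𝒜 y 0 : E) := by
  rw [gch_decompose_mul_apply]; simp

lemma gch_mul1 (x y : E) :
    (decompose 𝒜 (x * y) 1 : E) =
      (decompose 𝒜 x 0 : E) * (decompose 𝒜 y 1 : E) +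
        (decompose 𝒜 x 1 : E) * (decompose 𝒜 y 0 : E) := by
  rw [gch_decompose_mul_apply]
  rw [Finset.sum_range_succ, Finset.sum_range_succ, Finset.sum_range_zero]
  norm_num

lemma gch_mul2 (x y : E) :
    (decompose 𝒜 (x * y) 2 : E) =
      (decompose 𝒜 x 0 : E) * (decompose 𝒜 y 2 : E) +
        (decompose 𝒜 x 1 : E) * (decompose 𝒜 y 1 : E) +
        (decompose 𝒜 x 2 : E) * (decompose 𝒜 y 0 : E) := by
  rw [gch_decompose_mul_apply]
  rw [Finset.sum_range_succ, Finset.sum_range_succ, Finset.sum_range_succ,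
    Finset.sum_range_zero]
  norm_num

lemma gch_decompose_sum {α : Type*} (s : Finset α) (g : α → E) (c : ℕ) :
    (decompose 𝒜 (∑ t ∈ s, g t) c : E) = ∑ t ∈ s, (decompose 𝒜 (g t) c : E) := by
  simp_rw [← GradedAlgebra.proj_apply]
  exact map_sum (GradedAlgebra.proj 𝒜 c) g s

lemma gch_decompose_smul (a : R) (x : E) (c : ℕ) :
    (decompose 𝒜 (a • x) c : E) = a • (decompose 𝒜 x c : E) := by
  simp_rw [← GradedAlgebra.proj_apply]
  exact map_smul (GradedAlgebra.proj 𝒜 c) a x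

end graded

section matrixpow
open DirectSum
variable {R E : Type*} [CommRing R] [Ring E] [Algebra R E]
variable (𝒜 : ℕ → Submodule R E) [GradedAlgebra 𝒜]

lemma gch_smul_algebraMap (r : R) (x : E) : x * algebraMap R E r = r • x := by
  rw [← Algebra.commutes, ← Algebra.smul_def]

lemma gch_pow_proj {n : ℕ} (A v : Matrix (Fin n) (Fin n) E) (lam : Fin n → R)
    (h0 : ∀ i j, (decompose 𝒜 (A i j) 0 : E) = algebraMap R E (if i = j then lam i else 0))
    (h1 : ∀ i j, (decompose 𝒜 (A i j) 1 : E) = v i j) (k : ℕ) (i j : Fin n) :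
    (decompose 𝒜 ((A ^ k) i j) 0 : E) = algebraMap R E (if i = j then lam i ^ k else 0) ∧
    (decompose 𝒜 ((A ^ k) i j) 1 : E) = gchD k (lam i) (lam j) • v i j ∧
    (decompose 𝒜 ((A ^ k) i j) 2 : E) =
      (∑ t, gchE k (lam i) (lam t) (lam j) • (v i t * v t j)) +
        gchD k (lam i) (lam j) • (decompose 𝒜 (A i j) 2 : E) := by
  induction k generalizing i j with
  | zero =>
    rw [pow_zero]
    by_cases hij : i = j
    · subst hij
      have h1 : (1 : Matrix (Fin n) (Fin n) E) i i = algebraMap R E 1 := by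
        simp [Matrix.one_apply]
      rw [h1]
      refine ⟨?_, ?_, ?_⟩
      · rw [decompose_of_mem_same 𝒜 (SetLike.algebraMap_mem_graded 𝒜 1)]
        simp
      · rw [decompose_of_mem_ne 𝒜 (SetLike.algebraMap_mem_graded 𝒜 1) (by norm_num)]
        simp [gchD]
      · rw [decompose_of_mem_ne 𝒜 (SetLike.algebraMap_mem_graded 𝒜 1) (by norm_num)]
        simp [gchD, gchE]
    · have h1 : (1 : Matrix (Fin n) (Fin n) E) i j = 0 := by
        simp [Matrix.one_apply, hij]
      rw [h1]
      simp [gchD, gchE, hij]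
  | succ k ih =>
    have w0 : ∀ i j, (decompose 𝒜 ((A ^ k) i j) 0 : E)
        = algebraMap R E (if i = j then lam i ^ k else 0) := fun i j => (ih i j).1
    have w1 : ∀ i j, (decompose 𝒜 ((A ^ k) i j) 1 : E)
        = gchD k (lam i) (lam j) • v i j := fun i j => (ih i j).2.1
    have w2 : ∀ i j, (decompose 𝒜 ((A ^ k) i j) 2 : E) =
        (∑ t, gchE k (lam i) (lam t) (lam j) • (v i t * v t j)) +
          gchD k (lam i) (lam j) • (decompose 𝒜 (A i j) 2 : E) := fun i j => (ih i j).2.2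
    have hentry : (A ^ (k + 1)) i j = ∑ t, (A ^ k) i t * A t j := by
      rw [pow_succ, Matrix.mul_apply]
    refine ⟨?_, ?_, ?_⟩
    · rw [hentry, gch_decompose_sum]
      simp_rw [gch_mul0, w0, h0, ← map_mul, ← map_sum]
      congr 1
      by_cases hij : i = j
      · subst hij
        simp [Finset.sum_ite_eq, pow_succ]
      · rw [if_neg hij]
        apply Finset.sum_eq_zero
        intro t _
        by_cases hit : i = t
        · subst hit
          rw [if_neg hij, mul_zero]
        · rw [if_neg hit, zero_mul]
    · rw [hentry, gch_decompose_sum]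
      simp_rw [gch_mul1, w0, w1, h0, h1, ← Algebra.smul_def, gch_smul_algebraMap,
        smul_smul]
      rw [Finset.sum_add_distrib]
      simp only [ite_smul, zero_smul, smul_ite, smul_zero, mul_ite, mul_zero,
        ite_mul, zero_mul, Finset.sum_ite_eq, Finset.sum_ite_eq', Finset.mem_univ, if_true]
      rw [show gchD (k + 1) (lam i) (lam j)
        = lam i ^ k + lam j * gchD k (lam i) (lam j) from rfl, add_smul]
    · rw [hentry, gch_decompose_sum]
      simp_rw [gch_mul2, w0, w1, w2, h0, h1, ← Algebra.smul_def, gch_smul_algebraMap,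
        smul_mul_assoc]
      rw [Finset.sum_add_distrib, Finset.sum_add_distrib]
      simp only [ite_smul, zero_smul, smul_ite, smul_zero, mul_ite, mul_zero,
        ite_mul, zero_mul, Finset.sum_ite_eq, Finset.sum_ite_eq', Finset.mem_univ, if_true]
      rw [smul_add, Finset.smul_sum]
      simp_rw [smul_smul]
      have hE : ∀ t, gchE (k + 1) (lam i) (lam t) (lam j)
          = gchD k (lam i) (lam t) + lam j * gchE k (lam i) (lam t) (lam j) := fun _ => rfl
      have hDD : gchD (k + 1) (lam i) (lam j)
          = lam i ^ k + lam j * gchD k (lam i) (lam j) := rfl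
      simp_rw [hE, hDD, add_smul]
      rw [Finset.sum_add_distrib]
      abel

end matrixpow

set_option maxHeartbeats 1000000 in
open Polynomial in
/-- If `A₀ = diag(λ₁, …, λₙ)` has pairwise distinct diagonal entries, `A₁ = (vᵢⱼ)`
with `vᵢⱼ` of degree 1, and `B = f(A)` where `f` is the characteristic polynomial of
`A₀`, then for `r ≠ s` the `(r,s)` entry of the degree-two component of `B` equals
`(λ_r − λ_s)⁻¹ (f'(λ_r) v_rr + f'(λ_s) v_ss) v_rs`. -/
theorem grassmann_cayley_hamilton_lemma_degree_two
    (R : Type*) [Field R] (m n : ℕ)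
    (A : Matrix (Fin n) (Fin n) (ExteriorAlgebra R (Fin m → R)))
    (lam : Fin n → R) (hlam : Function.Injective lam)
    (hA₀ : ∀ i j, (DirectSum.decompose (fun i : ℕ => ⋀[R]^i (Fin m → R)) (A i j) 0 :
        ExteriorAlgebra R (Fin m → R)) =
      algebraMap R _ (Matrix.diagonal lam i j))
    (v : Matrix (Fin n) (Fin n) (ExteriorAlgebra R (Fin m → R)))
    (hv : ∀ i j, v i j ∈ ⋀[R]^1 (Fin m → R))
    (hA₁ : ∀ i j, (DirectSum.decompose (fun i : ℕ => ⋀[R]^i (Fin m → R)) (A i j) 1 :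
        ExteriorAlgebra R (Fin m → R)) = v i j)
    (f : R[X]) (hf : f = ∏ i, (X - C (lam i)))
    (B : Matrix (Fin n) (Fin n) (ExteriorAlgebra R (Fin m → R)))
    (hB : B = Polynomial.aeval A f)
    (r s : Fin n) (hrs : r ≠ s) :
    (DirectSum.decompose (fun i : ℕ => ⋀[R]^i (Fin m → R)) (B r s) 2 :
        ExteriorAlgebra R (Fin m → R)) =
      (lam r - lam s)⁻¹ •
        (((Polynomial.derivative f).eval (lam r) • v r r +
          (Polynomial.derivative f).eval (lam s) • v s s) * v r s) := by
  classical
  have hroot : ∀ i, f.eval (lam i) = 0 := by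
    intro i
    rw [hf, eval_prod]
    exact Finset.prod_eq_zero (Finset.mem_univ i) (by simp)
  have hsub : ∀ i j : Fin n, i ≠ j → lam i - lam j ≠ 0 := fun i j h =>
    sub_ne_zero.mpr fun e => h (hlam e)
  have hD : ∀ i j : Fin n, i ≠ j → (f.sum fun k c => c * gchD k (lam i) (lam j)) = 0 := by
    intro i j hij
    have h := gchD_sum f (lam i) (lam j)
    rw [hroot i, hroot j, sub_zero] at h
    rcases mul_eq_zero.mp h with h' | h'
    · exact absurd h' (hsub i j hij)
    · exact h'
  have hDd : ∀ i : Fin n,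
      (f.sum fun k c => c * gchD k (lam i) (lam i)) = (derivative f).eval (lam i) :=
    fun i => gchD_sum_diag f (lam i)
  have hE0 : ∀ t : Fin n, t ≠ r → t ≠ s →
      (f.sum fun k c => c * gchE k (lam r) (lam t) (lam s)) = 0 := by
    intro t htr hts
    have h := gchE_sum f (lam r) (lam t) (lam s)
    rw [hD r t (Ne.symm htr), hD t s hts, sub_zero] at h
    rcases mul_eq_zero.mp h with h' | h'
    · exact absurd h' (hsub r s hrs)
    · exact h'
  have hEr : (f.sum fun k c => c * gchE k (lam r) (lam r) (lam s)) =
      (lam r - lam s)⁻¹ * (derivative f).eval (lam r) := by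
    have h := gchE_sum f (lam r) (lam r) (lam s)
    rw [hDd r, hD r s hrs, sub_zero] at h
    rw [eq_inv_mul_iff_mul_eq₀ (hsub r s hrs)]
    exact h
  have hEs : (f.sum fun k c => c * gchE k (lam r) (lam s) (lam s)) =
      -((lam r - lam s)⁻¹ * (derivative f).eval (lam s)) := by
    have h := gchE_sum f (lam r) (lam s) (lam s)
    rw [hDd s, hD r s hrs, zero_sub] at h
    rw [show -((lam r - lam s)⁻¹ * (derivative f).eval (lam s))
        = (lam r - lam s)⁻¹ * (-(derivative f).eval (lam s)) by ring,
      eq_inv_mul_iff_mul_eq₀ (hsub r s hrs)]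
    exact h
  -- matrix power components
  have h0 : ∀ i j, (DirectSum.decompose (fun i : ℕ => ⋀[R]^i (Fin m → R)) (A i j) 0 :
      ExteriorAlgebra R (Fin m → R)) = algebraMap R _ (if i = j then lam i else 0) := by
    intro i j
    rw [hA₀ i j, Matrix.diagonal_apply]
  have key := gch_pow_proj (fun i : ℕ => ⋀[R]^i (Fin m → R)) A v lam h0 hA₁
  -- the entry of B
  have hBrs : B r s = ∑ k ∈ Finset.range (f.natDegree + 1), f.coeff k • ((A ^ k) r s) := by
    rw [hB, Polynomial.aeval_eq_sum_range]
    simp [Matrix.sum_apply]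
  rw [hBrs, gch_decompose_sum]
  have hterm : ∀ k, (DirectSum.decompose (fun i : ℕ => ⋀[R]^i (Fin m → R))
      (f.coeff k • ((A ^ k) r s)) 2 : ExteriorAlgebra R (Fin m → R)) =
      f.coeff k • ((∑ t, gchE k (lam r) (lam t) (lam s) • (v r t * v t s)) +
        gchD k (lam r) (lam s) •
          (DirectSum.decompose (fun i : ℕ => ⋀[R]^i (Fin m → R)) (A r s) 2 :
            ExteriorAlgebra R (Fin m → R))) := by
    intro k
    rw [gch_decompose_smul, (key k r s).2.2]
  simp_rw [hterm, smul_add, Finset.smul_sum, smul_smul]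
  rw [Finset.sum_add_distrib, Finset.sum_comm]
  simp_rw [← Finset.sum_smul]
  have hc1 : ∀ t : Fin n, (∑ k ∈ Finset.range (f.natDegree + 1),
      f.coeff k * gchE k (lam r) (lam t) (lam s)) =
      f.sum fun k c => c * gchE k (lam r) (lam t) (lam s) := fun t =>
    (Polynomial.sum_over_range f
      (f := fun k c => c * _) (fun k => zero_mul _)).symm
  have hc2 : (∑ k ∈ Finset.range (f.natDegree + 1),
      f.coeff k * gchD k (lam r) (lam s)) =
      f.sum fun k c => c * gchD k (lam r) (lam s) :=
    (Polynomial.sum_over_range f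
      (f := fun k c => c * _) (fun k => zero_mul _)).symm
  rw [hc2, hD r s hrs, zero_smul, add_zero]
  simp_rw [hc1]
  -- reduce the sum over t to t = r and t = s
  rw [show (∑ t : Fin n, (f.sum fun k c => c * gchE k (lam r) (lam t) (lam s)) •
        (v r t * v t s)) =
      ∑ t ∈ ({r, s} : Finset (Fin n)), (f.sum fun k c => c * gchE k (lam r) (lam t) (lam s)) •
        (v r t * v t s) from
    (Finset.sum_subset (Finset.subset_univ _) (fun t _ ht => by
      rw [Finset.mem_insert, Finset.mem_singleton, not_or] at ht
      rw [hE0 t ht.1 ht.2, zero_smul])).symm]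
  rw [Finset.sum_insert (by simp [hrs]), Finset.sum_singleton, hEr, hEs]
  -- anticommutation
  obtain ⟨x, hx⟩ : ∃ x, ExteriorAlgebra.ι R x = v r s := by
    have h := hv r s
    rwa [show ⋀[R]^1 (Fin m → R)
      = LinearMap.range (ExteriorAlgebra.ι R (M := Fin m → R)) from pow_one _] at h
  obtain ⟨y, hy⟩ : ∃ y, ExteriorAlgebra.ι R y = v s s := by
    have h := hv s s
    rwa [show ⋀[R]^1 (Fin m → R)
      = LinearMap.range (ExteriorAlgebra.ι R (M := Fin m → R)) from pow_one _] at h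
  have hanti : v r s * v s s = -(v s s * v r s) := by
    rw [← hx, ← hy]
    exact eq_neg_of_add_eq_zero_left (ExteriorAlgebra.ι_add_mul_swap x y)
  rw [hanti, smul_neg, neg_smul, neg_neg]
  rw [add_mul, smul_mul_assoc, smul_mul_assoc, smul_add, smul_smul, smul_smul]
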